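/- (SWAP has no entangling capability) Let d be a positive integer and let S be the SWAP matrix indexed by Fin d × Fin d, with entries S (a,b) (a',b') = 1 if a = b' and b = a' and 0 otherwise. Then e(S) = 0 and Δ²(S) = 0. -/

import Mathlib

noncomputable section

open Matrix
open scoped Kronecker

/-- The swap `T₁₃` of subsystems 1 and 3 on the two-copy space. -/
def T13 (d₁ d₂ : ℕ) :
    Matrix ((Fin d₁ × Fin d₂) × (Fin d₁ × Fin d₂)) ((Fin d₁ × Fin d₂) × (Fin d₁ × Fin d₂)) ℂ :=
  Matrix.of fun x y =>
    if x.1.1 = y.2.1 ∧ x.2.1 = y.1.1 ∧ x.1.2 = y.1.2 ∧ x.2.2 = y.2.2 then 1 else 0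

/-- The swap `T₂₄` of subsystems 2 and 4 on the two-copy space. -/
def T24 (d₁ d₂ : ℕ) :
    Matrix ((Fin d₁ × Fin d₂) × (Fin d₁ × Fin d₂)) ((Fin d₁ × Fin d₂) × (Fin d₁ × Fin d₂)) ℂ :=
  Matrix.of fun x y =>
    if x.1.2 = y.2.2 ∧ x.2.2 = y.1.2 ∧ x.1.1 = y.1.1 ∧ x.2.1 = y.2.1 then 1 else 0

/-- `P₁₃⁺ = (1 + T₁₃)/2`. -/
def P13p (d₁ d₂ : ℕ) := (2 : ℂ)⁻¹ • (1 + T13 d₁ d₂)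

/-- `P₁₃⁻ = (1 − T₁₃)/2`. -/
def P13m (d₁ d₂ : ℕ) := (2 : ℂ)⁻¹ • (1 - T13 d₁ d₂)

/-- `P₂₄⁺ = (1 + T₂₄)/2`. -/
def P24p (d₁ d₂ : ℕ) := (2 : ℂ)⁻¹ • (1 + T24 d₁ d₂)

/-- The entangling power
`e(U) = (8/(d₁(d₁+1)d₂(d₂+1))) · Tr((U⊗U) P₁₃⁺ P₂₄⁺ (U⊗U)ᴴ P₁₃⁻)`. -/
def ePow (d₁ d₂ : ℕ) (U : Matrix (Fin d₁ × Fin d₂) (Fin d₁ × Fin d₂) ℂ) : ℂ :=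
  (8 / ((d₁ : ℂ) * ((d₁ : ℂ) + 1) * (d₂ : ℂ) * ((d₂ : ℂ) + 1))) *
    ((U ⊗ₖ U) * P13p d₁ d₂ * P24p d₁ d₂ * (U ⊗ₖ U)ᴴ * P13m d₁ d₂).trace

/-- The permutation operator on the four-copy space induced by a permutation `σ` of the
four odd positions {1,3,5,7}: it permutes the four `Fin d₁` factors according to `σ`
while fixing all `Fin d₂` factors. -/
def Vodd (d₁ d₂ : ℕ) (σ : Equiv.Perm (Fin 4)) :
    Matrix (Fin 4 → Fin d₁ × Fin d₂) (Fin 4 → Fin d₁ × Fin d₂) ℂ :=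
  Matrix.of fun f g =>
    if (∀ i, (f i).1 = (g (σ⁻¹ i)).1) ∧ (∀ i, (f i).2 = (g i).2) then 1 else 0

/-- The permutation operator on the four-copy space induced by a permutation `σ` of the
four even positions {2,4,6,8}: it permutes the four `Fin d₂` factors according to `σ`
while fixing all `Fin d₁` factors. -/
def Veven (d₁ d₂ : ℕ) (σ : Equiv.Perm (Fin 4)) :
    Matrix (Fin 4 → Fin d₁ × Fin d₂) (Fin 4 → Fin d₁ × Fin d₂) ℂ :=
  Matrix.of fun f g =>
    if (∀ i, (f i).2 = (g (σ⁻¹ i)).2) ∧ (∀ i, (f i).1 = (g i).1) then 1 else 0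

/-- `P₁₃₅₇⁺`: the average of the 24 permutation operators over all permutations of the
odd positions {1,3,5,7}. -/
def P1357 (d₁ d₂ : ℕ) :
    Matrix (Fin 4 → Fin d₁ × Fin d₂) (Fin 4 → Fin d₁ × Fin d₂) ℂ :=
  ((Nat.factorial 4 : ℂ))⁻¹ • ∑ σ : Equiv.Perm (Fin 4), Vodd d₁ d₂ σ

/-- `P₂₄₆₈⁺`: the average of the 24 permutation operators over all permutations of the
even positions {2,4,6,8}. -/
def P2468 (d₁ d₂ : ℕ) :
    Matrix (Fin 4 → Fin d₁ × Fin d₂) (Fin 4 → Fin d₁ × Fin d₂) ℂ :=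
  ((Nat.factorial 4 : ℂ))⁻¹ • ∑ σ : Equiv.Perm (Fin 4), Veven d₁ d₂ σ

/-- `T₁₃` on the four-copy space: the swap of subsystems 1 and 3. -/
def T13c (d₁ d₂ : ℕ) := Vodd d₁ d₂ (Equiv.swap (0 : Fin 4) 1)

/-- `T₅₇` on the four-copy space: the swap of subsystems 5 and 7. -/
def T57c (d₁ d₂ : ℕ) := Vodd d₁ d₂ (Equiv.swap (2 : Fin 4) 3)

/-- `P₁₃⁻ = (1 − T₁₃)/2` on the four-copy space. -/
def P13mc (d₁ d₂ : ℕ) := (2 : ℂ)⁻¹ • (1 - T13c d₁ d₂)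

/-- `P₅₇⁻ = (1 − T₅₇)/2` on the four-copy space. -/
def P57mc (d₁ d₂ : ℕ) := (2 : ℂ)⁻¹ • (1 - T57c d₁ d₂)

/-- The fourfold Kronecker power `U^{⊗4}`. -/
def kpow4 (d₁ d₂ : ℕ) (U : Matrix (Fin d₁ × Fin d₂) (Fin d₁ × Fin d₂) ℂ) :
    Matrix (Fin 4 → Fin d₁ × Fin d₂) (Fin 4 → Fin d₁ × Fin d₂) ℂ :=
  Matrix.of fun f g => ∏ i, U (f i) (g i)

/-- `D_d = 1/(d(d+1)(d+2)(d+3))`. -/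
def Dc (d : ℕ) : ℂ := 1 / ((d : ℂ) * ((d : ℂ) + 1) * ((d : ℂ) + 2) * ((d : ℂ) + 3))

/-- The squared entangling power deviation
`Δ²(U) = 4·(4!)²·D_{d₁}·D_{d₂}·Tr(U^{⊗4} P₁₃₅₇⁺ P₂₄₆₈⁺ (U^{⊗4})ᴴ P₁₃⁻ P₅₇⁻) − e(U)²`. -/
def deltaSq (d₁ d₂ : ℕ) (U : Matrix (Fin d₁ × Fin d₂) (Fin d₁ × Fin d₂) ℂ) : ℂ :=
  4 * (Nat.factorial 4 : ℂ) ^ 2 * Dc d₁ * Dc d₂ *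
      (kpow4 d₁ d₂ U * P1357 d₁ d₂ * P2468 d₁ d₂ * (kpow4 d₁ d₂ U)ᴴ *
        P13mc d₁ d₂ * P57mc d₁ d₂).trace -
    (ePow d₁ d₂ U) ^ 2

/-- The SWAP matrix on `Fin d × Fin d`. -/
def Sw (d : ℕ) : Matrix (Fin d × Fin d) (Fin d × Fin d) ℂ :=
  Matrix.of fun x y => if x.1 = y.2 ∧ x.2 = y.1 then 1 else 0


section Aux
open Equiv

variable {α : Type*} [DecidableEq α] [Fintype α]

/-- Permutation matrix of an equiv. -/
def PM (e : Equiv.Perm α) : Matrix α α ℂ := e.toPEquiv.toMatrix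

omit [Fintype α] in
lemma PM_apply (e : Equiv.Perm α) (i j : α) : PM e i j = if e i = j then 1 else 0 := by
  simp [PM, PEquiv.toMatrix_apply, Equiv.toPEquiv_apply, eq_comm]

lemma PM_mul (e f : Equiv.Perm α) : PM e * PM f = PM (e.trans f) := by
  rw [PM, PM, PM, Equiv.toPEquiv_trans, PEquiv.toMatrix_trans]

omit [Fintype α] in
lemma PM_one : PM (Equiv.refl α) = (1 : Matrix α α ℂ) := by
  rw [PM, Equiv.toPEquiv_refl, PEquiv.toMatrix_refl]

omit [Fintype α] in
lemma PM_conjTranspose (e : Equiv.Perm α) : (PM e)ᴴ = PM e.symm := by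
  ext i j
  have h : e j = i ↔ e.symm i = j := by constructor <;> rintro rfl <;> simp
  simp only [conjTranspose_apply, PM_apply]
  rw [if_congr h rfl rfl]
  split_ifs <;> simp

omit [DecidableEq α] [Fintype α] in
lemma iteOneMulAux (p q : Prop) [Decidable p] [Decidable q] :
    (if p then (1:ℂ) else 0) * (if q then 1 else 0) = if p ∧ q then 1 else 0 := by
  split_ifs <;> simp_all

variable (d : ℕ)

/-- The equiv corresponding to `Sw ⊗ Sw`. -/
def eS : Equiv.Perm ((Fin d × Fin d) × (Fin d × Fin d)) :=
  ⟨fun x => ((x.1.2, x.1.1), (x.2.2, x.2.1)), fun x => ((x.1.2, x.1.1), (x.2.2, x.2.1)),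
   fun _ => rfl, fun _ => rfl⟩

def e13E : Equiv.Perm ((Fin d × Fin d) × (Fin d × Fin d)) :=
  ⟨fun x => ((x.2.1, x.1.2), (x.1.1, x.2.2)), fun x => ((x.2.1, x.1.2), (x.1.1, x.2.2)),
   fun _ => rfl, fun _ => rfl⟩

def e24E : Equiv.Perm ((Fin d × Fin d) × (Fin d × Fin d)) :=
  ⟨fun x => ((x.1.1, x.2.2), (x.2.1, x.1.2)), fun x => ((x.1.1, x.2.2), (x.2.1, x.1.2)),
   fun _ => rfl, fun _ => rfl⟩

def eS4 : Equiv.Perm (Fin 4 → Fin d × Fin d) :=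
  ⟨fun f i => ((f i).2, (f i).1), fun f i => ((f i).2, (f i).1),
   fun _ => rfl, fun _ => rfl⟩

def eO (σ : Equiv.Perm (Fin 4)) : Equiv.Perm (Fin 4 → Fin d × Fin d) :=
  ⟨fun f j => ((f (σ j)).1, (f j).2), fun f j => ((f (σ⁻¹ j)).1, (f j).2),
   fun f => funext fun j => by simp, fun f => funext fun j => by simp⟩

def eE (σ : Equiv.Perm (Fin 4)) : Equiv.Perm (Fin 4 → Fin d × Fin d) :=
  ⟨fun f j => ((f j).1, (f (σ j)).2), fun f j => ((f j).1, (f (σ⁻¹ j)).2),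
   fun f => funext fun j => by simp, fun f => funext fun j => by simp⟩

lemma hSwK : Sw d ⊗ₖ Sw d = PM (eS d) := by
  ext x y
  simp only [kroneckerMap_apply, Sw, of_apply, PM_apply, eS, Equiv.coe_fn_mk]
  rw [iteOneMulAux]
  refine if_congr ?_ rfl rfl
  simp only [Prod.ext_iff]
  tauto

lemma hT13 : T13 d d = PM (e13E d) := by
  ext x y
  simp only [T13, of_apply, PM_apply, e13E, Equiv.coe_fn_mk]
  refine if_congr ?_ rfl rfl
  simp only [Prod.ext_iff]
  tauto

lemma hT24 : T24 d d = PM (e24E d) := by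
  ext x y
  simp only [T24, of_apply, PM_apply, e24E, Equiv.coe_fn_mk]
  refine if_congr ?_ rfl rfl
  simp only [Prod.ext_iff]
  tauto

lemma hVodd (σ : Equiv.Perm (Fin 4)) : Vodd d d σ = PM (eO d σ) := by
  ext f g
  simp only [Vodd, of_apply, PM_apply, eO, Equiv.coe_fn_mk]
  refine if_congr ?_ rfl rfl
  constructor
  · rintro ⟨h1, h2⟩
    funext j
    have h1' := h1 (σ j)
    rw [Equiv.Perm.inv_def, Equiv.symm_apply_apply] at h1'
    exact Prod.ext h1' (h2 j)
  · intro h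
    refine ⟨fun i => ?_, fun i => ?_⟩
    · have := congrFun h (σ⁻¹ i)
      rw [Equiv.Perm.inv_def, Equiv.apply_symm_apply] at this
      exact (Prod.ext_iff.mp this).1
    · exact (Prod.ext_iff.mp (congrFun h i)).2

lemma hVeven (σ : Equiv.Perm (Fin 4)) : Veven d d σ = PM (eE d σ) := by
  ext f g
  simp only [Veven, of_apply, PM_apply, eE, Equiv.coe_fn_mk]
  refine if_congr ?_ rfl rfl
  constructor
  · rintro ⟨h1, h2⟩
    funext j
    have h1' := h1 (σ j)
    rw [Equiv.Perm.inv_def, Equiv.symm_apply_apply] at h1'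
    exact Prod.ext (h2 j) h1'
  · intro h
    refine ⟨fun i => ?_, fun i => ?_⟩
    · have := congrFun h (σ⁻¹ i)
      rw [Equiv.Perm.inv_def, Equiv.apply_symm_apply] at this
      exact (Prod.ext_iff.mp this).2
    · exact (Prod.ext_iff.mp (congrFun h i)).1

lemma hkpow4 : kpow4 d d (Sw d) = PM (eS4 d) := by
  ext f g
  simp only [kpow4, of_apply, PM_apply, eS4, Equiv.coe_fn_mk]
  by_cases h : (fun i => ((f i).2, (f i).1)) = g
  · rw [if_pos h]
    refine Finset.prod_eq_one fun i _ => ?_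
    have hi := Prod.ext_iff.mp (congrFun h i)
    simp only [Sw, of_apply]
    exact if_pos ⟨hi.2, hi.1⟩
  · rw [if_neg h]
    have : ∃ i, ((f i).2, (f i).1) ≠ g i := by
      by_contra hc
      push_neg at hc
      exact h (funext hc)
    obtain ⟨i, hi⟩ := this
    refine Finset.prod_eq_zero (Finset.mem_univ i) ?_
    simp only [Sw, of_apply]
    rw [if_neg]
    rintro ⟨h1, h2⟩
    exact hi (Prod.ext h2 h1)

-- two-copy algebra
lemma comm13 : PM (eS d) * T13 d d = T24 d d * PM (eS d) := by
  rw [hT13, hT24, PM_mul, PM_mul]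
  congr 1

lemma comm24 : PM (eS d) * T24 d d = T13 d d * PM (eS d) := by
  rw [hT13, hT24, PM_mul, PM_mul]
  congr 1

lemma hSS : PM (eS d) * PM (eS d) = 1 := by
  rw [PM_mul, show (eS d).trans (eS d) = Equiv.refl _ from Equiv.ext fun x => rfl, PM_one]

lemma hT13sq : T13 d d * T13 d d = 1 := by
  rw [hT13, PM_mul, show (e13E d).trans (e13E d) = Equiv.refl _ from Equiv.ext fun x => rfl,
    PM_one]

lemma AP13p : PM (eS d) * P13p d d = P24p d d * PM (eS d) := by
  simp only [P13p, P24p, mul_smul_comm, smul_mul_assoc, mul_add, add_mul, mul_one, one_mul,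
    comm13]

lemma AP24p : PM (eS d) * P24p d d = P13p d d * PM (eS d) := by
  simp only [P13p, P24p, mul_smul_comm, smul_mul_assoc, mul_add, add_mul, mul_one, one_mul,
    comm24]

lemma P13pm : P13p d d * P13m d d = 0 := by
  have h : (1 + T13 d d) * (1 - T13 d d) = 0 := by
    rw [add_mul, one_mul, mul_sub, mul_one, hT13sq d]
    abel
  simp only [P13p, P13m, smul_mul_assoc, mul_smul_comm, h, smul_zero]

lemma key2 : (Sw d ⊗ₖ Sw d) * P13p d d * P24p d d * (Sw d ⊗ₖ Sw d)ᴴ * P13m d d = 0 := by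
  have h1 : ∀ X, PM (eS d) * (P13p d d * X) = P24p d d * (PM (eS d) * X) := fun X => by
    rw [← mul_assoc, AP13p, mul_assoc]
  have h2 : ∀ X, PM (eS d) * (P24p d d * X) = P13p d d * (PM (eS d) * X) := fun X => by
    rw [← mul_assoc, AP24p, mul_assoc]
  have h3 : ∀ X, PM (eS d) * (PM (eS d) * X) = X := fun X => by
    rw [← mul_assoc, hSS, one_mul]
  rw [hSwK, PM_conjTranspose, show (eS d).symm = eS d from rfl]
  simp only [mul_assoc]
  rw [h1, h2, h3, P13pm, mul_zero]

lemma ePow_swap_zero : ePow d d (Sw d) = 0 := by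
  rw [ePow, key2, trace_zero, mul_zero]

-- four-copy algebra
lemma hVodd_mul (σ τ : Equiv.Perm (Fin 4)) :
    Vodd d d σ * Vodd d d τ = Vodd d d (σ * τ) := by
  rw [hVodd, hVodd, hVodd, PM_mul]
  congr 1

lemma habs : P1357 d d * T13c d d = P1357 d d := by
  rw [P1357, T13c, smul_mul_assoc, Finset.sum_mul]
  congr 1
  refine Fintype.sum_equiv (Equiv.mulRight (Equiv.swap (0 : Fin 4) 1)) _ _ fun σ => ?_
  rw [hVodd_mul]
  rfl

lemma hP1357m : P1357 d d * P13mc d d = 0 := by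
  rw [P13mc, mul_smul_comm, mul_sub, mul_one, habs, sub_self, smul_zero]

lemma c1 (σ : Equiv.Perm (Fin 4)) :
    PM (eS4 d) * Vodd d d σ = Veven d d σ * PM (eS4 d) := by
  rw [hVodd, hVeven, PM_mul, PM_mul]
  congr 1

lemma c2 (σ : Equiv.Perm (Fin 4)) :
    PM (eS4 d) * Veven d d σ = Vodd d d σ * PM (eS4 d) := by
  rw [hVodd, hVeven, PM_mul, PM_mul]
  congr 1

lemma hS4S4 : PM (eS4 d) * PM (eS4 d) = 1 := by
  rw [PM_mul, show (eS4 d).trans (eS4 d) = Equiv.refl _ from Equiv.ext fun x => rfl, PM_one]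

lemma cP1 : PM (eS4 d) * P1357 d d = P2468 d d * PM (eS4 d) := by
  rw [P1357, P2468, mul_smul_comm, smul_mul_assoc, Finset.mul_sum, Finset.sum_mul]
  congr 1
  exact Finset.sum_congr rfl fun σ _ => c1 d σ

lemma cP2 : PM (eS4 d) * P2468 d d = P1357 d d * PM (eS4 d) := by
  rw [P1357, P2468, mul_smul_comm, smul_mul_assoc, Finset.mul_sum, Finset.sum_mul]
  congr 1
  exact Finset.sum_congr rfl fun σ _ => c2 d σ

lemma key4 : kpow4 d d (Sw d) * P1357 d d * P2468 d d * (kpow4 d d (Sw d))ᴴ *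
    P13mc d d * P57mc d d = 0 := by
  have h1 : ∀ X, PM (eS4 d) * (P1357 d d * X) = P2468 d d * (PM (eS4 d) * X) := fun X => by
    rw [← mul_assoc, cP1, mul_assoc]
  have h2 : ∀ X, PM (eS4 d) * (P2468 d d * X) = P1357 d d * (PM (eS4 d) * X) := fun X => by
    rw [← mul_assoc, cP2, mul_assoc]
  have h3 : ∀ X, PM (eS4 d) * (PM (eS4 d) * X) = X := fun X => by
    rw [← mul_assoc, hS4S4, one_mul]
  rw [hkpow4, PM_conjTranspose, show (eS4 d).symm = eS4 d from rfl]
  simp only [mul_assoc]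
  rw [h1, h2, h3, ← mul_assoc (P1357 d d), hP1357m, zero_mul, mul_zero]

end Aux

/-- (SWAP has no entangling capability) The SWAP operation has vanishing entangling
power and vanishing squared entangling power deviation. -/
theorem ePow_deltaSq_swap (d : ℕ) (hd : 0 < d) :
    ePow d d (Sw d) = 0 ∧ deltaSq d d (Sw d) = 0 := by
  constructor
  · exact ePow_swap_zero d
  · rw [deltaSq, key4, trace_zero, mul_zero, ePow_swap_zero d]
    norm_num
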